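/- arXiv:1101.5308 — 3 statements merged into one kernel-verified Lean document; each statement's English description precedes it below -/
import Mathlib

section
/- If a bounded convex region S of the plane of Euclidean diameter D(S) admits a cover by grid cells of side length ℓ (each cell intersecting S in area at least γℓ² for a constant γ > 0), and ℓ ≤ D(S), then the cell-diameter D_□(S) of the cover satisfies D_□(S) ≤ c·D(S)/ℓ for some absolute constant c, where cell-distance is the length of a shortest path of pairwise adjacent cells of the cover (cells adjacent if they touch by side or corner). -/
open MeasureTheory

/-- The closed axis-parallel grid cell of side `ℓ` with index `p ∈ ℤ²`. -/
def gridCell (ℓ : ℝ) (p : ℤ × ℤ) : Set (EuclideanSpace ℝ (Fin 2)) :=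
  {x | (p.1 : ℝ) * ℓ ≤ x 0 ∧ x 0 ≤ ((p.1 : ℝ) + 1) * ℓ ∧
       (p.2 : ℝ) * ℓ ≤ x 1 ∧ x 1 ≤ ((p.2 : ℝ) + 1) * ℓ}

/-- Two grid cells are adjacent (touch by side or corner) iff their indices are at
Chebyshev distance at most 1. -/
def cellAdj (p q : ℤ × ℤ) : Prop :=
  max (p.1 - q.1).natAbs (p.2 - q.2).natAbs ≤ 1

lemma adj1 {ℓ u v : ℝ} {a b : ℤ} (hℓ : 0 < ℓ) (h1 : (a:ℝ)*ℓ ≤ u) (h2 : u ≤ ((a:ℝ)+1)*ℓ)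
    (h3 : (b:ℝ)*ℓ ≤ v) (h4 : v ≤ ((b:ℝ)+1)*ℓ) (h : |u - v| < ℓ) : (a - b).natAbs ≤ 1 := by
  rw [abs_lt] at h
  have hab : -1 ≤ a - b ∧ a - b ≤ 1 := by
    constructor
    · by_contra hc
      push_neg at hc
      have : (b:ℝ) - a ≥ 2 := by
        have : b - a ≥ 2 := by omega
        exact_mod_cast this
      nlinarith
    · by_contra hc
      push_neg at hc
      have : (a:ℝ) - b ≥ 2 := by
        have : a - b ≥ 2 := by omega
        exact_mod_cast this
      nlinarith
  omega

lemma coord_le {x y : EuclideanSpace ℝ (Fin 2)} (j : Fin 2) : |x j - y j| ≤ dist x y := by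
  rw [EuclideanSpace.dist_eq]
  rw [← Real.sqrt_sq_eq_abs]
  apply Real.sqrt_le_sqrt
  have h2 : (x j - y j) ^ 2 = dist (x j) (y j) ^ 2 := by
    rw [Real.dist_eq, sq_abs]
  rw [h2]
  exact Finset.single_le_sum (f := fun i => dist (x i) (y i) ^ 2)
    (fun i _ => by positivity) (Finset.mem_univ j)

lemma adjOf {ℓ : ℝ} {z w : EuclideanSpace ℝ (Fin 2)} {p q : ℤ × ℤ} (hℓ : 0 < ℓ)
    (hz : z ∈ gridCell ℓ p) (hw : w ∈ gridCell ℓ q)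
    (h0 : |z 0 - w 0| < ℓ) (h1 : |z 1 - w 1| < ℓ) : cellAdj p q := by
  obtain ⟨a1, a2, a3, a4⟩ := hz
  obtain ⟨b1, b2, b3, b4⟩ := hw
  exact max_le (adj1 hℓ a1 a2 b1 b2 h0) (adj1 hℓ a3 a4 b3 b4 h1)

theorem stmt_3 (γ : ℝ) (hγ : 0 < γ) :
    ∃ c : ℝ, 0 < c ∧
      ∀ (S : Set (EuclideanSpace ℝ (Fin 2))) (ℓ : ℝ) (𝒞 : Set (ℤ × ℤ)),
        Convex ℝ S → Bornology.IsBounded S → 0 < ℓ → ℓ ≤ Metric.diam S →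
        S ⊆ ⋃ p ∈ 𝒞, gridCell ℓ p →
        (∀ p ∈ 𝒞, γ * ℓ ^ 2 ≤ (volume (gridCell ℓ p ∩ S)).toReal) →
        ∀ p ∈ 𝒞, ∀ q ∈ 𝒞, ∃ (k : ℕ) (f : ℕ → ℤ × ℤ),
          f 0 = p ∧ f k = q ∧ (∀ i ≤ k, f i ∈ 𝒞) ∧
          (∀ i < k, cellAdj (f i) (f (i + 1))) ∧
          (k : ℝ) ≤ c * Metric.diam S / ℓ := by
  refine ⟨2, by norm_num, ?_⟩
  intro S ℓ 𝒞 hconv hbdd hℓ hℓD hcov hvol p hp q hq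
  set D := Metric.diam S with hD
  -- nonempty intersections
  have hne : ∀ r ∈ 𝒞, (gridCell ℓ r ∩ S).Nonempty := by
    intro r hr
    rw [Set.nonempty_iff_ne_empty]
    intro he
    have := hvol r hr
    rw [he] at this
    simp at this
    nlinarith [mul_pos hγ (pow_pos hℓ 2)]
  obtain ⟨x, hxc, hxS⟩ := hne p hp
  obtain ⟨y, hyc, hyS⟩ := hne q hq
  have hdxy : dist x y ≤ D := Metric.dist_le_diam_of_mem hbdd hxS hyS
  set k : ℕ := ⌊D / ℓ⌋₊ + 1 with hk
  have hk0 : (0:ℝ) < k := by positivity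
  have hDk : D < k * ℓ := by
    have h1 : D / ℓ < (k:ℝ) := by
      rw [hk]; push_cast; exact Nat.lt_floor_add_one _
    calc D = D / ℓ * ℓ := by field_simp
    _ < k * ℓ := by apply mul_lt_mul_of_pos_right h1 hℓ
  have hkD : (k : ℝ) ≤ 2 * D / ℓ := by
    have h1 : (⌊D / ℓ⌋₊ : ℝ) ≤ D / ℓ := Nat.floor_le (by positivity)
    have h2 : (1:ℝ) ≤ D / ℓ := (one_le_div hℓ).mpr hℓD
    have : (k:ℝ) = (⌊D / ℓ⌋₊ : ℝ) + 1 := by push_cast [hk]; ring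
    rw [this]
    rw [mul_div_assoc]
    linarith
  -- the segment points
  set z : ℕ → EuclideanSpace ℝ (Fin 2) :=
    fun i => (1 - (i:ℝ)/k) • x + ((i:ℝ)/k) • y with hz
  have hz0 : z 0 = x := by simp [hz]
  have hzk : z k = y := by
    have : (k:ℝ)/k = 1 := by field_simp
    simp [hz, this]
  have hzS : ∀ i ≤ k, z i ∈ S := by
    intro i hi
    apply hconv hxS hyS
    · have : (i:ℝ)/k ≤ 1 := by
        rw [div_le_one hk0]
        exact_mod_cast hi
      linarith
    · positivity
    · ring
  -- coordinate step bound
  have hstep : ∀ (i : ℕ) (j : Fin 2), |z i j - z (i+1) j| < ℓ := by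
    intro i j
    have he : z i j - z (i+1) j = (1/k) * (x j - y j) := by
      simp only [hz, PiLp.add_apply, PiLp.smul_apply, smul_eq_mul]
      push_cast
      field_simp
      ring
    rw [he, abs_mul]
    have h1 : |x j - y j| ≤ D := le_trans (coord_le j) hdxy
    have h2 : |(1:ℝ)/k| = 1/k := abs_of_pos (by positivity)
    rw [h2]
    calc 1/(k:ℝ) * |x j - y j| ≤ 1/k * D := by
          apply mul_le_mul_of_nonneg_left h1 (by positivity)
      _ < ℓ := by
          rw [div_mul_eq_mul_div, one_mul, div_lt_iff₀ hk0]
          linarith [hDk]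
  -- choose cells
  have hex : ∀ i : ℕ, ∃ r : ℤ × ℤ, i ≤ k → r ∈ 𝒞 ∧ z i ∈ gridCell ℓ r := by
    intro i
    by_cases hi : i ≤ k
    · have := hcov (hzS i hi)
      simp only [Set.mem_iUnion] at this
      obtain ⟨r, hr, hzr⟩ := this
      exact ⟨r, fun _ => ⟨hr, hzr⟩⟩
    · exact ⟨p, fun h => absurd h hi⟩
  set f : ℕ → ℤ × ℤ := fun i =>
    if i = 0 then p else if k ≤ i then q else Classical.choose (hex i) with hf
  have hkne : k ≠ 0 := by omega
  have hf0 : f 0 = p := by simp [hf]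
  have hfk : f k = q := by simp [hf, hkne]
  have hfP : ∀ i ≤ k, f i ∈ 𝒞 ∧ z i ∈ gridCell ℓ (f i) := by
    intro i hi
    rcases Nat.eq_zero_or_pos i with h0 | h0
    · subst h0; rw [hf0, hz0]; exact ⟨hp, hxc⟩
    rcases eq_or_lt_of_le hi with hik | hik
    · subst hik; rw [hfk, hzk]; exact ⟨hq, hyc⟩
    · have : f i = Classical.choose (hex i) := by
        simp only [hf]; rw [if_neg (by omega), if_neg (by omega)]
      rw [this]
      exact Classical.choose_spec (hex i) hi
  refine ⟨k, f, hf0, hfk, fun i hi => (hfP i hi).1, ?_, ?_⟩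
  · intro i hi
    have h1 := (hfP i (le_of_lt hi)).2
    have h2 := (hfP (i+1) hi).2
    exact adjOf hℓ h1 h2 (hstep i 0) (hstep i 1)
  · calc (k:ℝ) ≤ 2 * D / ℓ := hkD
      _ = 2 * Metric.diam S / ℓ := by rw [hD]
end

section
/- Let F(z₁,…,z_n) count the number of points z_i ∈ ℝ² that are 'isolated', i.e., at Euclidean distance greater than R from every other point z_j (j ≠ i). Then changing the position of a single point z_k changes F by at most 7. -/
open scoped Classical
open Complex Real

noncomputable def mySector (v : ℂ) : Fin 6 :=
  ⟨min (⌊(v.arg + π) / (π/3)⌋.toNat) 5, by omega⟩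

lemma mySector_arg {v₁ v₂ : ℂ} (h : mySector v₁ = mySector v₂) :
    |v₁.arg - v₂.arg| ≤ π/3 := by
  have hπ : (0:ℝ) < π/3 := by positivity
  set x := (v₁.arg + π) / (π/3) with hx
  set y := (v₂.arg + π) / (π/3) with hy
  have hx0 : 0 < x := by
    apply div_pos _ hπ; linarith [Complex.neg_pi_lt_arg v₁]
  have hx6 : x ≤ 6 := by
    rw [hx, div_le_iff₀ hπ]; have := Complex.arg_le_pi v₁; linarith
  have hy0 : 0 < y := by
    apply div_pos _ hπ; linarith [Complex.neg_pi_lt_arg v₂]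
  have hy6 : y ≤ 6 := by
    rw [hy, div_le_iff₀ hπ]; have := Complex.arg_le_pi v₂; linarith
  have key : |x - y| ≤ 1 := by
    have hfx := Int.floor_le x
    have hfx' := Int.lt_floor_add_one x
    have hfy := Int.floor_le y
    have hfy' := Int.lt_floor_add_one y
    have hax : 0 ≤ ⌊x⌋ := Int.floor_nonneg.2 hx0.le
    have hay : 0 ≤ ⌊y⌋ := Int.floor_nonneg.2 hy0.le
    have hbx : ⌊x⌋ ≤ 6 := by exact_mod_cast (Int.floor_le_floor hx6).trans_eq (by norm_num)
    have hby : ⌊y⌋ ≤ 6 := by exact_mod_cast (Int.floor_le_floor hy6).trans_eq (by norm_num)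
    have hmin : min (⌊x⌋.toNat) 5 = min (⌊y⌋.toNat) 5 := by
      have := congrArg Fin.val h
      simpa [mySector, hx, hy] using this
    have h5 : ⌊x⌋ = ⌊y⌋ ∨ (⌊x⌋ ≥ 5 ∧ ⌊y⌋ ≥ 5) := by omega
    rcases h5 with h5 | ⟨h5x, h5y⟩
    · rw [abs_le]; constructor <;> [skip; skip] <;>
        · push_cast [h5] at hfx hfx' hfy hfy' ⊢; linarith
    · have : (5:ℝ) ≤ x := le_trans (by exact_mod_cast h5x) hfx
      have : (5:ℝ) ≤ y := le_trans (by exact_mod_cast h5y) hfy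
      rw [abs_le]; constructor <;> linarith
  have : v₁.arg - v₂.arg = (x - y) * (π/3) := by
    rw [hx, hy, sub_mul, div_mul_cancel₀ _ hπ.ne', div_mul_cancel₀ _ hπ.ne']; ring
  rw [this, abs_mul, abs_of_pos hπ]
  calc |x - y| * (π/3) ≤ 1 * (π/3) := by
        exact mul_le_mul_of_nonneg_right key hπ.le
    _ = π/3 := one_mul _

lemma re_mul_conj (v₁ v₂ : ℂ) :
    (v₁ * (starRingEnd ℂ) v₂).re = ‖v₁‖ * ‖v₂‖ * Real.cos (v₁.arg - v₂.arg) := by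
  conv_lhs => rw [← Complex.norm_mul_exp_arg_mul_I v₁, ← Complex.norm_mul_exp_arg_mul_I v₂]
  rw [map_mul, ← Complex.exp_conj]
  have : (starRingEnd ℂ) (↑v₂.arg * I) = ↑(-v₂.arg) * I := by
    rw [map_mul, Complex.conj_ofReal, Complex.conj_I]; push_cast; ring
  rw [this, Complex.conj_ofReal, mul_mul_mul_comm, ← Complex.exp_add]
  have h2 : (↑v₁.arg * I + ↑(-v₂.arg) * I) = ↑(v₁.arg - v₂.arg) * I := by push_cast; ring
  rw [h2, ← Complex.ofReal_mul, Complex.re_ofReal_mul, Complex.exp_ofReal_mul_I_re]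

lemma close_of_sector {R : ℝ} {v₁ v₂ : ℂ} (h : mySector v₁ = mySector v₂)
    (h₁ : ‖v₁‖ ≤ R) (h₂ : ‖v₂‖ ≤ R) :
    ‖v₁ - v₂‖ ≤ R := by
  have hR0 : 0 ≤ R := le_trans (norm_nonneg _) h₁
  set r₁ := ‖v₁‖
  set r₂ := ‖v₂‖
  have hr₁ : 0 ≤ r₁ := norm_nonneg _
  have hr₂ : 0 ≤ r₂ := norm_nonneg _
  have hcos : Real.cos (v₁.arg - v₂.arg) ≥ 1/2 := by
    have harg := mySector_arg h
    have h1 : Real.cos (v₁.arg - v₂.arg) = Real.cos |v₁.arg - v₂.arg| := by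
      rw [Real.cos_abs]
    rw [h1, ← Real.cos_pi_div_three]
    apply Real.cos_le_cos_of_nonneg_of_le_pi (abs_nonneg _)
    · linarith [Real.pi_pos]
    · exact harg
  have hre : (v₁ * (starRingEnd ℂ) v₂).re ≥ r₁ * r₂ * (1/2) := by
    rw [re_mul_conj]
    exact mul_le_mul_of_nonneg_left hcos (mul_nonneg hr₁ hr₂)
  have hsq : Complex.normSq (v₁ - v₂) ≤ R^2 := by
    rw [Complex.normSq_sub]
    have e₁ : Complex.normSq v₁ = r₁^2 := by rw [← Complex.sq_norm]
    have e₂ : Complex.normSq v₂ = r₂^2 := by rw [← Complex.sq_norm]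
    rw [e₁, e₂]
    rcases le_total r₁ r₂ with hle | hle
    · nlinarith
    · nlinarith
  calc ‖v₁ - v₂‖ = Real.sqrt (Complex.normSq (v₁ - v₂)) := by rw [Complex.norm_def]
    _ ≤ Real.sqrt (R^2) := Real.sqrt_le_sqrt hsq
    _ = R := by rw [Real.sqrt_sq hR0]

lemma packing {ι : Type*} (R : ℝ) (s : Finset ι) (p : ι → ℂ) (c : ℂ)
    (hpair : ∀ i ∈ s, ∀ j ∈ s, i ≠ j → R < dist (p i) (p j))
    (hball : ∀ i ∈ s, dist (p i) c ≤ R) : s.card ≤ 6 := by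
  by_contra hlt
  push_neg at hlt
  obtain ⟨i, hi, j, hj, hij, hsec⟩ :=
    Finset.exists_ne_map_eq_of_card_lt_of_maps_to
      (by simpa using hlt : (Finset.univ : Finset (Fin 6)).card < s.card)
      (fun i _ => Finset.mem_univ (mySector (p i - c)))
  have h1 : ‖p i - c‖ ≤ R := by
    simpa [Complex.dist_eq] using hball i hi
  have h2 : ‖p j - c‖ ≤ R := by
    simpa [Complex.dist_eq] using hball j hj
  have := close_of_sector hsec h1 h2
  have heq : (p i - c) - (p j - c) = p i - p j := by ring
  rw [heq] at this
  exact absurd (hpair i hi j hj hij) (by rw [Complex.dist_eq]; linarith)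

lemma one_side {n : ℕ} (R : ℝ) (z w : Fin n → EuclideanSpace ℝ (Fin 2)) (k : Fin n)
    (h : ∀ i, i ≠ k → z i = w i) :
    (Finset.univ.filter (fun i : Fin n => ∀ j, j ≠ i → R < dist (z i) (z j))).card ≤
    (Finset.univ.filter (fun i : Fin n => ∀ j, j ≠ i → R < dist (w i) (w j))).card + 7 := by
  classical
  set A := Finset.univ.filter (fun i : Fin n => ∀ j, j ≠ i → R < dist (z i) (z j)) with hA
  set B := Finset.univ.filter (fun i : Fin n => ∀ j, j ≠ i → R < dist (w i) (w j)) with hB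
  set T := A.filter (fun i => i ≠ k ∧ dist (z i) (w k) ≤ R) with hT
  have hsub : A ⊆ B ∪ insert k T := by
    intro i hiA
    by_cases hiB : i ∈ B
    · exact Finset.mem_union_left _ hiB
    apply Finset.mem_union_right
    by_cases hik : i = k
    · rw [hik]; exact Finset.mem_insert_self _ _
    apply Finset.mem_insert_of_mem
    rw [hT, Finset.mem_filter]
    refine ⟨hiA, hik, ?_⟩
    rw [hB, Finset.mem_filter] at hiB
    push_neg at hiB
    obtain ⟨j, hji, hjd⟩ := hiB (Finset.mem_univ i)
    rw [hA, Finset.mem_filter] at hiA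
    by_cases hjk : j = k
    · rw [← hjk, h i hik]; exact hjd
    · exfalso
      rw [← h i hik, ← h j hjk] at hjd
      exact absurd (hiA.2 j hji) (not_lt.2 hjd)
  have hTcard : T.card ≤ 6 := by
    apply packing R T (fun i => Complex.orthonormalBasisOneI.repr.symm (z i))
      (Complex.orthonormalBasisOneI.repr.symm (w k))
    · intro i hi j hj hij
      rw [LinearIsometryEquiv.dist_map]
      rw [hT, Finset.mem_filter, hA, Finset.mem_filter] at hi
      exact hi.1.2 j (Ne.symm hij)
    · intro i hi
      rw [LinearIsometryEquiv.dist_map]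
      rw [hT, Finset.mem_filter] at hi
      exact hi.2.2
  calc A.card ≤ (B ∪ insert k T).card := Finset.card_le_card hsub
    _ ≤ B.card + (insert k T).card := Finset.card_union_le _ _
    _ ≤ B.card + (T.card + 1) := by
        have := Finset.card_insert_le k T
        omega
    _ ≤ B.card + 7 := by omega

/-- The number of isolated points (at distance `> R` from every other point) among
`z 1, …, z n` in the Euclidean plane changes by at most 7 when a single point is moved. -/
theorem stmt_9 {n : ℕ} (R : ℝ) (hR : 0 < R)
    (z w : Fin n → EuclideanSpace ℝ (Fin 2)) (k : Fin n)
    (h : ∀ i, i ≠ k → z i = w i) :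
    |((Finset.univ.filter (fun i : Fin n => ∀ j, j ≠ i → R < dist (z i) (z j))).card : ℝ) -
      ((Finset.univ.filter (fun i : Fin n => ∀ j, j ≠ i → R < dist (w i) (w j))).card : ℝ)|
      ≤ 7 := by
  have h1 := one_side R z w k h
  have h2 := one_side R w z k (fun i hi => (h i hi).symm)
  rw [abs_le]
  constructor
  · have : ((Finset.univ.filter (fun i : Fin n => ∀ j, j ≠ i → R < dist (w i) (w j))).card : ℝ) ≤
        ((Finset.univ.filter (fun i : Fin n => ∀ j, j ≠ i → R < dist (z i) (z j))).card : ℝ) + 7 := by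
      exact_mod_cast h2
    linarith
  · have : ((Finset.univ.filter (fun i : Fin n => ∀ j, j ≠ i → R < dist (z i) (z j))).card : ℝ) ≤
        ((Finset.univ.filter (fun i : Fin n => ∀ j, j ≠ i → R < dist (w i) (w j))).card : ℝ) + 7 := by
      exact_mod_cast h1
    linarith
end

section
/- In the plane, if points p₁,…,p_k all lie within distance R of a point q and are pairwise at distance greater than R from each other, then k ≤ 6. -/
open Real

set_option maxHeartbeats 1000000 in
/-- Packing lemma in the Euclidean plane: at most 6 points can lie in the closed disk of
radius `R` around `q` while being pairwise at distance more than `R` from each other. -/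
theorem stmt_10 (R : ℝ) (hR : 0 < R) (k : ℕ) (q : EuclideanSpace ℝ (Fin 2))
    (p : Fin k → EuclideanSpace ℝ (Fin 2))
    (hclose : ∀ i, dist (p i) q ≤ R)
    (hfar : ∀ i j, i ≠ j → R < dist (p i) (p j)) :
    k ≤ 6 := by
  by_contra hk
  push_neg at hk
  have hdist : ∀ (x y : EuclideanSpace ℝ (Fin 2)),
      dist x y = Real.sqrt ((x 0 - y 0)^2 + (x 1 - y 1)^2) := by
    intro x y
    rw [EuclideanSpace.dist_eq, Fin.sum_univ_two, Real.dist_eq, Real.dist_eq, sq_abs, sq_abs]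
  -- each point differs from q
  have hne : ∀ i : Fin k, p i ≠ q := by
    intro i hiq
    have h0 : (0 : ℕ) < k := by omega
    have h1 : (1 : ℕ) < k := by omega
    set j : Fin k := if i = ⟨0, h0⟩ then ⟨1, h1⟩ else ⟨0, h0⟩ with hj
    have hij : i ≠ j := by
      by_cases h : i = ⟨0, h0⟩ <;> simp [hj, h]
    have := hfar i j hij
    rw [hiq, dist_comm] at this
    exact absurd (hclose j) (by linarith)
  -- complex displacement
  set z : Fin k → ℂ := fun i => ⟨p i 0 - q 0, p i 1 - q 1⟩ with hz
  have habs : ∀ i, ‖z i‖ = dist (p i) q := by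
    intro i
    rw [hdist, Complex.norm_def, Complex.normSq_apply]
    congr 1
    simp [hz]
    ring
  have hz0 : ∀ i, z i ≠ 0 := by
    intro i h
    have h2 := habs i
    rw [h, norm_zero] at h2
    exact hne i (dist_eq_zero.mp h2.symm)
  set θ : Fin k → ℝ := fun i => (z i).arg with hθ
  have hθlb : ∀ i, -π < θ i := fun i => Complex.neg_pi_lt_arg _
  have hθub : ∀ i, θ i ≤ π := fun i => Complex.arg_le_pi _
  have hπ : (0:ℝ) < π / 3 := by positivity
  have hnn : ∀ i, (0:ℝ) ≤ (π - θ i) / (π / 3) := fun i =>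
    div_nonneg (by linarith [hθub i]) hπ.le
  -- bucket
  have hbnd : ∀ i, (⌊(π - θ i) / (π / 3)⌋).toNat < 6 := by
    intro i
    have h1 : (π - θ i) / (π / 3) < 6 := by
      rw [div_lt_iff₀ hπ]
      have := hθlb i; linarith
    have h3 : ⌊(π - θ i) / (π / 3)⌋ < 6 := Int.floor_lt.mpr (by exact_mod_cast h1)
    have h4 : (0:ℤ) ≤ ⌊(π - θ i) / (π / 3)⌋ := Int.floor_nonneg.mpr (hnn i)
    omega
  set f : Fin k → Fin 6 := fun i => ⟨(⌊(π - θ i) / (π / 3)⌋).toNat, hbnd i⟩ with hf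
  obtain ⟨i, j, hij, hfij⟩ := Fintype.exists_ne_map_eq_of_card_lt f (by simpa using hk)
  -- same bucket ⇒ angle difference < π/3
  have hfloor : ⌊(π - θ i) / (π / 3)⌋ = ⌊(π - θ j) / (π / 3)⌋ := by
    have h1 : (⌊(π - θ i) / (π / 3)⌋).toNat = (⌊(π - θ j) / (π / 3)⌋).toNat := by
      simpa [hf] using congrArg Fin.val hfij
    have h2 : (0:ℤ) ≤ ⌊(π - θ i) / (π / 3)⌋ := Int.floor_nonneg.mpr (hnn i)
    have h3 : (0:ℤ) ≤ ⌊(π - θ j) / (π / 3)⌋ := Int.floor_nonneg.mpr (hnn j)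
    omega
  have hang : |θ i - θ j| < π / 3 := by
    have hi1 := Int.floor_le ((π - θ i) / (π / 3))
    have hi2 := Int.lt_floor_add_one ((π - θ i) / (π / 3))
    have hj1 := Int.floor_le ((π - θ j) / (π / 3))
    have hj2 := Int.lt_floor_add_one ((π - θ j) / (π / 3))
    rw [hfloor] at hi1 hi2
    have e1 : (π - θ i) / (π / 3) - (π - θ j) / (π / 3) = (θ j - θ i) / (π / 3) := by ring
    have e2 : (π - θ j) / (π / 3) - (π - θ i) / (π / 3) = (θ i - θ j) / (π / 3) := by ring
    have c1 : (θ j - θ i) / (π / 3) < 1 := by rw [← e1]; linarith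
    have c2 : (θ i - θ j) / (π / 3) < 1 := by rw [← e2]; linarith
    have d1 := (div_lt_one hπ).mp c1
    have d2 := (div_lt_one hπ).mp c2
    rw [abs_lt]; constructor <;> linarith
  -- cosine bound
  have hcos : (1:ℝ)/2 < Real.cos (θ i - θ j) := by
    have h1 : Real.cos (π/3) < Real.cos |θ i - θ j| := by
      apply Real.cos_lt_cos_of_nonneg_of_le_pi (abs_nonneg _) _ hang
      linarith [Real.pi_pos]
    rw [Real.cos_abs, Real.cos_pi_div_three] at h1
    exact h1
  -- law of cosines
  set ri := ‖z i‖ with hri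
  set rj := ‖z j‖ with hrj
  have hai : ri * Real.cos (θ i) = (z i).re := Complex.norm_mul_cos_arg _
  have hbi : ri * Real.sin (θ i) = (z i).im := Complex.norm_mul_sin_arg _
  have haj : rj * Real.cos (θ j) = (z j).re := Complex.norm_mul_cos_arg _
  have hbj : rj * Real.sin (θ j) = (z j).im := Complex.norm_mul_sin_arg _
  have hdist2 : dist (p i) (p j) ^ 2 = ((z i).re - (z j).re)^2 + ((z i).im - (z j).im)^2 := by
    rw [hdist, Real.sq_sqrt (by positivity)]
    simp [hz]
  have hdist2' : dist (p i) (p j) ^ 2 = ri^2 + rj^2 - 2 * ri * rj * Real.cos (θ i - θ j) := by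
    rw [hdist2, ← hai, ← hbi, ← haj, ← hbj, Real.cos_sub]
    have si := Real.sin_sq_add_cos_sq (θ i)
    have sj := Real.sin_sq_add_cos_sq (θ j)
    nlinarith [si, sj]
  have hri_le : ri ≤ R := by rw [hri, habs]; exact hclose i
  have hrj_le : rj ≤ R := by rw [hrj, habs]; exact hclose j
  have hri0 : 0 ≤ ri := norm_nonneg _
  have hrj0 : 0 ≤ rj := norm_nonneg _
  have hfar' := hfar i j hij
  have hd0 : 0 ≤ dist (p i) (p j) := dist_nonneg
  have key : dist (p i) (p j) ^ 2 ≤ R ^ 2 := by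
    nlinarith [mul_nonneg hri0 hrj0, mul_nonneg (sub_nonneg.mpr hri_le) (sub_nonneg.mpr hrj_le),
      mul_nonneg (sub_nonneg.mpr hri_le) hri0, mul_nonneg (sub_nonneg.mpr hrj_le) hrj0, hcos]
  nlinarith [mul_pos (sub_pos.mpr hfar') (show (0:ℝ) < dist (p i) (p j) + R by linarith)]
end
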